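/- The Euclidean space ℝ^32 admits a Clifford system of 10 elements; that is, there exist ten self-adjoint linear endomorphisms P_0, …, P_9 of EuclideanSpace ℝ (Fin 32) with P_α ∘ P_α = Id for every α and P_α ∘ P_β = −P_β ∘ P_α whenever α ≠ β. -/

import Mathlib

open scoped RealInnerProductSpace

/-- Parity of the number of 1-bits of `n` (valid for `n < 32`). -/
def cliffPar (n : ℕ) : Bool :=
  (n % 2 + n / 2 % 2 + n / 4 % 2 + n / 8 % 2 + n / 16 % 2) % 2 == 1

/-- XOR on `Fin 32`. -/
def cliffXr (i m : Fin 32) : Fin 32 :=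
  ⟨i.val ^^^ m.val, by
    have : i.val ^^^ m.val < 2 ^ 5 := Nat.xor_lt_two_pow (by omega) (by omega)
    omega⟩

lemma cliffXr_invol (i m : Fin 32) : cliffXr (cliffXr i m) m = i := by
  simp [cliffXr, Nat.xor_xor_cancel_right]

lemma cliffXr_comm (i m n : Fin 32) : cliffXr (cliffXr i m) n = cliffXr (cliffXr i n) m := by
  simp [cliffXr, Nat.xor_assoc, Nat.xor_comm m.val n.val]

/-- Boolean sign bit. -/
def cliffB (a i : Fin 32) : Bool := cliffPar (a.val &&& i.val)

/-- Real sign. -/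
noncomputable def cliffS (a i : Fin 32) : ℝ := if cliffB a i then -1 else 1

/-- The signed-permutation endomorphism of `ℝ³²` with sign mask `a` and flip mask `m`. -/
noncomputable def cliffP (a m : Fin 32) :
    EuclideanSpace ℝ (Fin 32) →ₗ[ℝ] EuclideanSpace ℝ (Fin 32) where
  toFun x := WithLp.toLp 2 (fun i => cliffS a i * x (cliffXr i m))
  map_add' x y := by
    ext i
    simp [PiLp.add_apply]
    ring
  map_smul' c x := by
    ext i
    simp [PiLp.smul_apply, smul_eq_mul]
    ring

lemma cliffP_apply (a m : Fin 32) (x : EuclideanSpace ℝ (Fin 32)) (i : Fin 32) :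
    cliffP a m x i = cliffS a i * x (cliffXr i m) := rfl

/-- The xor involution as an equivalence of the index set. -/
def cliffE (m : Fin 32) : Fin 32 ≃ Fin 32 where
  toFun i := cliffXr i m
  invFun i := cliffXr i m
  left_inv i := cliffXr_invol i m
  right_inv i := cliffXr_invol i m

lemma sign_eq (p q : Bool) (h : p = q) :
    (if p then (-1 : ℝ) else 1) = if q then -1 else 1 := by rw [h]

lemma sign_anti (p q r s : Bool) (h : xor p q = !(xor r s)) :
    (if p then (-1 : ℝ) else 1) * (if q then -1 else 1)
      = -((if r then -1 else 1) * (if s then -1 else 1)) := by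
  cases p <;> cases q <;> cases r <;> cases s <;> simp_all

/-- Self-adjointness from the boolean sign condition. -/
lemma cliffP_selfAdjoint (a m : Fin 32)
    (h : ∀ i : Fin 32, cliffB a (cliffXr i m) = cliffB a i)
    (x y : EuclideanSpace ℝ (Fin 32)) :
    ⟪cliffP a m x, y⟫ = ⟪x, cliffP a m y⟫ := by
  simp only [PiLp.inner_apply, RCLike.inner_apply, conj_trivial, cliffP_apply]
  rw [← Equiv.sum_comp (cliffE m)
    (fun i => y i * (cliffS a i * x (cliffXr i m)))]
  refine Finset.sum_congr rfl fun i _ => ?_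
  show y (cliffXr i m) * (cliffS a (cliffXr i m) * x (cliffXr (cliffXr i m) m))
      = cliffS a i * y (cliffXr i m) * x i
  rw [cliffXr_invol, cliffS, cliffS, sign_eq _ _ (h i)]
  ring

lemma cliffS_sq (a i : Fin 32) : cliffS a i * cliffS a i = 1 := by
  unfold cliffS; split <;> norm_num

/-- Involutivity from the boolean sign condition. -/
lemma cliffP_sq (a m : Fin 32)
    (h : ∀ i : Fin 32, cliffB a (cliffXr i m) = cliffB a i) :
    cliffP a m ∘ₗ cliffP a m = LinearMap.id := by
  apply LinearMap.ext; intro x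
  ext i
  show cliffS a i * (cliffS a (cliffXr i m) * x (cliffXr (cliffXr i m) m)) = x i
  rw [cliffXr_invol, cliffS, cliffS, sign_eq _ _ (h i), ← cliffS, ← mul_assoc,
    cliffS_sq, one_mul]

/-- Anticommutation from the boolean sign condition. -/
lemma cliffP_anti (a m b n : Fin 32)
    (h : ∀ i : Fin 32,
      xor (cliffB a i) (cliffB b (cliffXr i m))
        = !(xor (cliffB b i) (cliffB a (cliffXr i n)))) :
    cliffP a m ∘ₗ cliffP b n = -(cliffP b n ∘ₗ cliffP a m) := by
  apply LinearMap.ext; intro x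
  ext i
  show cliffS a i * (cliffS b (cliffXr i m) * x (cliffXr (cliffXr i m) n))
      = -(cliffS b i * (cliffS a (cliffXr i n) * x (cliffXr (cliffXr i n) m)))
  rw [cliffXr_comm]
  have hs := sign_anti _ _ _ _ (h i)
  simp only [cliffS]
  rw [← mul_assoc, hs]
  ring

/-- Sign masks. -/
def cliffA : Fin 10 → Fin 32 := ![0, 1, 3, 5, 7, 9, 11, 13, 15, 31]

/-- Flip masks. -/
def cliffM : Fin 10 → Fin 32 := ![1, 0, 3, 7, 13, 15, 9, 11, 21, 5]

/-- The Euclidean space `ℝ^32` admits a Clifford system of 10 elements: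
ten self-adjoint endomorphisms squaring to the identity and pairwise anti-commuting
(the Clifford system `C₉`). -/
theorem exists_cliffordSystem_ten_elements_on_R32 :
    ∃ P : Fin 10 → (EuclideanSpace ℝ (Fin 32) →ₗ[ℝ] EuclideanSpace ℝ (Fin 32)),
      (∀ α, ∀ x y : EuclideanSpace ℝ (Fin 32), ⟪P α x, y⟫ = ⟪x, P α y⟫) ∧
      (∀ α, P α ∘ₗ P α = LinearMap.id) ∧
      (∀ α β, α ≠ β → P α ∘ₗ P β = -(P β ∘ₗ P α)) := by
  have h1 : ∀ (α : Fin 10) (i : Fin 32),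
      cliffB (cliffA α) (cliffXr i (cliffM α)) = cliffB (cliffA α) i := by decide
  have h2 : ∀ (α β : Fin 10), α ≠ β → ∀ i : Fin 32,
      xor (cliffB (cliffA α) i) (cliffB (cliffA β) (cliffXr i (cliffM α)))
        = !(xor (cliffB (cliffA β) i) (cliffB (cliffA α) (cliffXr i (cliffM β)))) := by
    decide
  refine ⟨fun α => cliffP (cliffA α) (cliffM α), ?_, ?_, ?_⟩
  · exact fun α => cliffP_selfAdjoint _ _ (h1 α)
  · exact fun α => cliffP_sq _ _ (h1 α)
  · exact fun α β hne => cliffP_anti _ _ _ _ (h2 α β hne)
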